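/- Let (G, K_D) be a deterministic mass action system on n species. If (G, K_D) has a positive reaction balanced state c ∈ ℝ^n_{>0}, then within every positive stoichiometric compatibility class of (G, K_D) there exists exactly one positive equilibrium, and every equilibrium of (G, K_D) is a reaction balanced state. -/

import Mathlib

open scoped ENNReal NNReal BigOperators Classical

noncomputable section

namespace CRN

/-- A complex: a vector in `ℤ_{≥0}^n`. -/
abbrev Cplx (n : ℕ) := Fin n → ℕ

/-- A reaction: an ordered pair of complexes (source, target). -/
abbrev Reaction (n : ℕ) := Cplx n × Cplx n

/-- A reaction network on `n` species: a finite set of reactions, each with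
distinct source and target. -/
structure Network (n : ℕ) where
  R : Finset (Reaction n)
  ne_src_tgt : ∀ r ∈ R, r.1 ≠ r.2

/-- The complexes of a network: vectors occurring as source or target of some reaction. -/
def Network.C {n : ℕ} (G : Network n) : Finset (Cplx n) :=
  G.R.image Prod.fst ∪ G.R.image Prod.snd

/-- A network is reversible if `y → y' ∈ R` implies `y' → y ∈ R`. -/
def Network.Reversible {n : ℕ} (G : Network n) : Prop :=
  ∀ r ∈ G.R, (r.2, r.1) ∈ G.R

/-- A network is weakly reversible if every reaction is contained in a closed
directed path `y_1 → y_2 → ⋯ → y_k` with `k ≥ 2` and `y_1 = y_k`. -/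
def Network.WeaklyReversible {n : ℕ} (G : Network n) : Prop :=
  ∀ r ∈ G.R, ∃ (k : ℕ) (ys : ℕ → Cplx n), 2 ≤ k ∧ ys 0 = ys (k - 1) ∧
    (∀ i, i < k - 1 → (ys i, ys (i + 1)) ∈ G.R) ∧
    (∃ i, i < k - 1 ∧ (ys i, ys (i + 1)) = r)

/-- Embedding of a complex into `ℝ^n`. -/
def toR {n : ℕ} (y : Cplx n) : Fin n → ℝ := fun i => (y i : ℝ)

/-- Embedding of a complex into `ℤ^n`. -/
def toZ {n : ℕ} (y : Cplx n) : Fin n → ℤ := fun i => (y i : ℤ)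

/-- Deterministic kinetics: a nonnegative rate function for each reaction,
zero for pairs which are not reactions of the network. -/
structure DetKin {n : ℕ} (G : Network n) where
  rate : Reaction n → (Fin n → ℝ) → ℝ
  nonneg : ∀ r z, 0 ≤ rate r z
  zero_off : ∀ r, r ∉ G.R → ∀ z, rate r z = 0

/-- Stochastic kinetics: a nonnegative rate function on `ℤ^n` for each reaction,
zero for pairs which are not reactions of the network. -/
structure StochKin {n : ℕ} (G : Network n) where
  rate : Reaction n → (Fin n → ℤ) → ℝ≥0
  zero_off : ∀ r, r ∉ G.R → ∀ x, rate r x = 0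

namespace Det

variable {n : ℕ} {G : Network n}

/-- `c` is an equilibrium: `∑_{y→y'∈R} (y'−y) λ_{y→y'}(c) = 0`. -/
def IsEquilibrium (Λ : DetKin G) (c : Fin n → ℝ) : Prop :=
  ∑ r ∈ G.R, Λ.rate r c • (toR r.2 - toR r.1) = 0

/-- `c` is reaction balanced (detailed balanced). -/
def ReactionBalanced (Λ : DetKin G) (c : Fin n → ℝ) : Prop :=
  ∀ y ∈ G.C, ∀ y' ∈ G.C, Λ.rate (y, y') c = Λ.rate (y', y) c

/-- `c` is complex balanced. -/
def ComplexBalanced (Λ : DetKin G) (c : Fin n → ℝ) : Prop :=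
  ∀ y ∈ G.C, ∑ y' ∈ G.C, Λ.rate (y, y') c = ∑ y' ∈ G.C, Λ.rate (y', y) c

/-- `c` is reaction vector balanced. -/
def RVBalanced (Λ : DetKin G) (c : Fin n → ℝ) : Prop :=
  ∀ ξ : Fin n → ℝ,
    ∑ r ∈ G.R.filter (fun r => toR r.2 - toR r.1 = ξ), Λ.rate r c =
    ∑ r ∈ G.R.filter (fun r => toR r.2 - toR r.1 = -ξ), Λ.rate r c

/-- `c` is cycle balanced. -/
def CycleBalanced (Λ : DetKin G) (c : Fin n → ℝ) : Prop :=
  ∀ j : ℕ, 3 ≤ j → ∀ ys : ℕ → Cplx n,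
    (∀ i < j, ys i ∈ G.C) →
    (∀ i < j, ∀ k < j, ys i = ys k → i = k) →
    ∏ i ∈ Finset.range j, Λ.rate (ys i, ys ((i + 1) % j)) c =
    ∏ i ∈ Finset.range j, Λ.rate (ys ((i + 1) % j), ys i) c

/-- The active subnetwork at a state `c`: the reactions with positive rate at `c`. -/
def activeSub (Λ : DetKin G) (c : Fin n → ℝ) : Network n :=
  ⟨G.R.filter (fun r => 0 < Λ.rate r c),
   fun r hr => G.ne_src_tgt r (Finset.mem_filter.mp hr).1⟩

end Det

/-- The stoichiometric subspace: the span of the reaction vectors. -/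
def stoichSubspace {n : ℕ} (G : Network n) : Submodule ℝ (Fin n → ℝ) :=
  Submodule.span ℝ ((fun r : Reaction n => toR r.2 - toR r.1) '' (G.R : Set (Reaction n)))

/-- The stoichiometric compatibility class of `v`: `(v + S) ∩ ℝ^n_{≥0}`. -/
def compatClass {n : ℕ} (G : Network n) (v : Fin n → ℝ) : Set (Fin n → ℝ) :=
  {z | z - v ∈ stoichSubspace G ∧ ∀ i, 0 ≤ z i}

/-- A measure on `ℤ^n`: a function with values in `[0,∞]`. -/
abbrev Meas (n : ℕ) := (Fin n → ℤ) → ℝ≥0∞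

namespace Stoch

variable {n : ℕ} {G : Network n}

def IsDistribution (π : Meas n) : Prop := ∑' x, π x = 1

def SigmaFinite (π : Meas n) : Prop := ∀ x, π x < ⊤

def FiniteMeas (π : Meas n) : Prop := ∑' x, π x < ⊤

def supp (π : Meas n) : Set (Fin n → ℤ) := {x | π x ≠ 0}

/-- `π` is within `Γ` if its support is nonempty and contained in `Γ`. -/
def Within (π : Meas n) (Γ : Set (Fin n → ℤ)) : Prop := (supp π).Nonempty ∧ supp π ⊆ Γ

/-- `π` is a stationary measure. -/
def Stationary (Λ : StochKin G) (π : Meas n) : Prop :=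
  ∀ x : Fin n → ℤ,
    π x * ∑ r ∈ G.R, (Λ.rate r x : ℝ≥0∞) =
    ∑ r ∈ G.R, π (x + toZ r.1 - toZ r.2) * (Λ.rate r (x + toZ r.1 - toZ r.2) : ℝ≥0∞)

def StationaryDistribution (Λ : StochKin G) (π : Meas n) : Prop :=
  IsDistribution π ∧ Stationary Λ π

/-- `π` is a reaction balanced measure. -/
def ReactionBalancedM (Λ : StochKin G) (π : Meas n) : Prop :=
  ∀ x : Fin n → ℤ, ∀ y ∈ G.C, ∀ y' ∈ G.C,
    π x * (Λ.rate (y, y') x : ℝ≥0∞) =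
    π (x + toZ y' - toZ y) * (Λ.rate (y', y) (x + toZ y' - toZ y) : ℝ≥0∞)

/-- `π` is a complex balanced measure. -/
def ComplexBalancedM (Λ : StochKin G) (π : Meas n) : Prop :=
  ∀ x : Fin n → ℤ, ∀ y ∈ G.C,
    π x * ∑ y' ∈ G.C, (Λ.rate (y, y') x : ℝ≥0∞) =
    ∑ y' ∈ G.C, π (x + toZ y' - toZ y) * (Λ.rate (y', y) (x + toZ y' - toZ y) : ℝ≥0∞)

/-- `π` is a reaction vector balanced measure (detailed balanced as a Markov chain). -/
def RVBalancedM (Λ : StochKin G) (π : Meas n) : Prop :=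
  ∀ x : Fin n → ℤ, ∀ ξ : Fin n → ℤ,
    π x * ∑ r ∈ G.R.filter (fun r => toZ r.2 - toZ r.1 = ξ), (Λ.rate r x : ℝ≥0∞) =
    π (x + ξ) * ∑ r ∈ G.R.filter (fun r => toZ r.2 - toZ r.1 = -ξ), (Λ.rate r (x + ξ) : ℝ≥0∞)

/-- `π` is a cycle balanced measure. -/
def CycleBalancedM (Λ : StochKin G) (π : Meas n) : Prop :=
  ∀ x : Fin n → ℤ, ∀ j : ℕ, 3 ≤ j → ∀ ys : ℕ → Cplx n,
    (∀ i < j, ys i ∈ G.C) →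
    (∀ i < j, ∀ k < j, ys i = ys k → i = k) →
    ∏ i ∈ Finset.range j,
      π (x + toZ (ys i)) * (Λ.rate (ys i, ys ((i + 1) % j)) (x + toZ (ys i)) : ℝ≥0∞) =
    ∏ i ∈ Finset.range j,
      π (x + toZ (ys ((i + 1) % j))) *
        (Λ.rate (ys ((i + 1) % j), ys i) (x + toZ (ys ((i + 1) % j))) : ℝ≥0∞)

/-- One step of the dynamics: from `u`, an active reaction takes `u` to `u + y' - y`. -/
def Step (Λ : StochKin G) (u v : Fin n → ℤ) : Prop :=
  ∃ r ∈ G.R, 0 < Λ.rate r u ∧ v = u + toZ r.2 - toZ r.1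

/-- `u` is accessible from `x`. -/
def Accessible (Λ : StochKin G) (x u : Fin n → ℤ) : Prop :=
  Relation.ReflTransGen (Step Λ) x u

/-- `Γ` is an irreducible component. -/
def IrredComp (Λ : StochKin G) (Γ : Set (Fin n → ℤ)) : Prop :=
  Γ.Nonempty ∧ ∀ x ∈ Γ, ∀ u, Accessible Λ x u ↔ u ∈ Γ

/-- `Γ` is active: every reaction is active at some state of `Γ`. -/
def ActiveSet (Λ : StochKin G) (Γ : Set (Fin n → ℤ)) : Prop :=
  ∀ r ∈ G.R, ∃ x ∈ Γ, 0 < Λ.rate r x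

/-- The active subnetwork of `(G,Λ)` in `Γ`. -/
def activeSubnet (Λ : StochKin G) (Γ : Set (Fin n → ℤ)) : Network n :=
  ⟨G.R.filter (fun r => ∃ x ∈ Γ, 0 < Λ.rate r x),
   fun r hr => G.ne_src_tgt r (Finset.mem_filter.mp hr).1⟩

/-- `(G,Λ)` is a reaction balanced stochastic reaction system. -/
def SysReactionBalanced (Λ : StochKin G) : Prop :=
  (∃ π Γ, StationaryDistribution Λ π ∧ IrredComp Λ Γ ∧ ActiveSet Λ Γ ∧ Within π Γ) ∧
  ∀ π Γ, StationaryDistribution Λ π → IrredComp Λ Γ → ActiveSet Λ Γ → Within π Γ →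
    ReactionBalancedM Λ π

/-- `(G,Λ)` is a complex balanced stochastic reaction system. -/
def SysComplexBalanced (Λ : StochKin G) : Prop :=
  (∃ π Γ, StationaryDistribution Λ π ∧ IrredComp Λ Γ ∧ ActiveSet Λ Γ ∧ Within π Γ) ∧
  ∀ π Γ, StationaryDistribution Λ π → IrredComp Λ Γ → ActiveSet Λ Γ → Within π Γ →
    ComplexBalancedM Λ π

/-- `(G,Λ)` is a reaction vector balanced stochastic reaction system. -/
def SysRVBalanced (Λ : StochKin G) : Prop :=
  (∃ π Γ, StationaryDistribution Λ π ∧ IrredComp Λ Γ ∧ ActiveSet Λ Γ ∧ Within π Γ) ∧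
  ∀ π Γ, StationaryDistribution Λ π → IrredComp Λ Γ → ActiveSet Λ Γ → Within π Γ →
    RVBalancedM Λ π

/-- `(G,Λ)` is a cycle balanced stochastic reaction system. -/
def SysCycleBalanced (Λ : StochKin G) : Prop :=
  (∃ π Γ, StationaryDistribution Λ π ∧ IrredComp Λ Γ ∧ ActiveSet Λ Γ ∧ Within π Γ) ∧
  ∀ π Γ, StationaryDistribution Λ π → IrredComp Λ Γ → ActiveSet Λ Γ → Within π Γ →
    CycleBalancedM Λ π

end Stoch

/-- A mass action system: a network together with positive rate constants
(set to `0` off the reaction set, per the usual convention). -/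
structure MASystem (n : ℕ) where
  G : Network n
  κ : Reaction n → ℝ
  pos : ∀ r ∈ G.R, 0 < κ r
  zero_off : ∀ r, r ∉ G.R → κ r = 0

/-- The deterministic mass action kinetics: `λ_{y→y'}(z) = 1_{{z ≥ 0}} κ_{y→y'} z^y`. -/
def MASystem.detKin {n : ℕ} (S : MASystem n) : DetKin S.G where
  rate r z := (if ∀ i, 0 ≤ z i then (1 : ℝ) else 0) * S.κ r * ∏ i, z i ^ (r.1 i)
  nonneg r z := by
    have hκ : 0 ≤ S.κ r := by
      by_cases h : r ∈ S.G.R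
      · exact le_of_lt (S.pos r h)
      · exact le_of_eq (S.zero_off r h).symm
    by_cases h : ∀ i, 0 ≤ z i
    · have hp : (0 : ℝ) ≤ ∏ i, z i ^ (r.1 i) :=
        Finset.prod_nonneg fun i _ => pow_nonneg (h i) _
      simp only [if_pos h, one_mul]
      exact mul_nonneg hκ hp
    · simp [if_neg h]
  zero_off r hr z := by simp [S.zero_off r hr]

/-- The stochastic mass action kinetics:
`λ_{y→y'}(x) = κ_{y→y'} · (x!/(x−y)!) · 1_{{x ≥ y}}`. -/
def MASystem.stochKin {n : ℕ} (S : MASystem n) : StochKin S.G where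
  rate r x :=
    if ∀ i, (r.1 i : ℤ) ≤ x i then
      (S.κ r).toNNReal *
        (((∏ i, ∏ j ∈ Finset.range (r.1 i), (x i - (j : ℤ))).toNat : ℝ≥0))
    else 0
  zero_off r hr x := by simp [S.zero_off r hr]

namespace Det

/-- `(G,K_D)` is a reaction balanced deterministic mass action system. -/
def SysReactionBalanced {n : ℕ} (S : MASystem n) : Prop :=
  (∃ c : Fin n → ℝ, (∀ i, 0 < c i) ∧ IsEquilibrium S.detKin c) ∧
  ∀ c : Fin n → ℝ, (∀ i, 0 < c i) → IsEquilibrium S.detKin c → ReactionBalanced S.detKin c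

/-- `(G,K_D)` is a complex balanced deterministic mass action system. -/
def SysComplexBalanced {n : ℕ} (S : MASystem n) : Prop :=
  (∃ c : Fin n → ℝ, (∀ i, 0 < c i) ∧ IsEquilibrium S.detKin c) ∧
  ∀ c : Fin n → ℝ, (∀ i, 0 < c i) → IsEquilibrium S.detKin c → ComplexBalanced S.detKin c

/-- `(G,K_D)` is a cycle balanced deterministic mass action system. -/
def SysCycleBalanced {n : ℕ} (S : MASystem n) : Prop :=
  (∃ c : Fin n → ℝ, (∀ i, 0 < c i) ∧ IsEquilibrium S.detKin c) ∧
  ∀ c : Fin n → ℝ, (∀ i, 0 < c i) → IsEquilibrium S.detKin c → CycleBalanced S.detKin c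

end Det

end CRN

open CRN
namespace RBAux

open Finset Real

variable {n : ℕ} {S : MASystem n} {c : Fin n → ℝ}

lemma rate_def (r : Reaction n) (z : Fin n → ℝ) :
    S.detKin.rate r z = (if ∀ i, 0 ≤ z i then (1:ℝ) else 0) * S.κ r * ∏ i, z i ^ (r.1 i) := rfl

lemma rate_of_not_nonneg {z : Fin n → ℝ} (hz : ¬ ∀ i, 0 ≤ z i) (r : Reaction n) :
    S.detKin.rate r z = 0 := by
  rw [rate_def, if_neg hz]; ring

lemma rate_pos {z : Fin n → ℝ} (hz : ∀ i, 0 ≤ z i) {r : Reaction n} (hr : r ∈ S.G.R)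
    (hsupp : ∀ i, r.1 i ≠ 0 → 0 < z i) : 0 < S.detKin.rate r z := by
  rw [rate_def, if_pos hz, one_mul]
  refine mul_pos (S.pos r hr) (Finset.prod_pos fun i _ => ?_)
  rcases Nat.eq_zero_or_pos (r.1 i) with h | h
  · simp [h]
  · exact pow_pos (hsupp i h.ne') _
lemma of_rate_pos {z : Fin n → ℝ} {r : Reaction n} (h : 0 < S.detKin.rate r z) :
    r ∈ S.G.R ∧ ∀ i, r.1 i ≠ 0 → 0 < z i := by
  by_cases hz : ∀ i, 0 ≤ z i
  · constructor
    · by_contra hr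
      rw [S.detKin.zero_off r hr z] at h; exact lt_irrefl 0 h
    · intro i hi
      rcases (hz i).lt_or_eq with h' | h'
      · exact h'
      · exfalso
        rw [rate_def, if_pos hz, one_mul] at h
        have : (∏ j, z j ^ (r.1 j)) = 0 := by
          apply Finset.prod_eq_zero (Finset.mem_univ i)
          rw [← h', zero_pow hi]
        rw [this, mul_zero] at h; exact lt_irrefl 0 h
  · rw [rate_of_not_nonneg hz] at h; exact absurd h (lt_irrefl 0)

lemma mem_C_fst {r : Reaction n} (hr : r ∈ S.G.R) : r.1 ∈ S.G.C := by
  unfold Network.C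
  exact Finset.mem_union_left _ (Finset.mem_image_of_mem _ hr)

lemma mem_C_snd {r : Reaction n} (hr : r ∈ S.G.R) : r.2 ∈ S.G.C := by
  unfold Network.C
  exact Finset.mem_union_right _ (Finset.mem_image_of_mem _ hr)

lemma rev_mem (hc : ∀ i, 0 < c i) (hrb : Det.ReactionBalanced S.detKin c)
    {r : Reaction n} (hr : r ∈ S.G.R) : (r.2, r.1) ∈ S.G.R := by
  by_contra hrev
  have h1 : S.detKin.rate (r.1, r.2) c = S.detKin.rate (r.2, r.1) c :=
    hrb r.1 (mem_C_fst hr) r.2 (mem_C_snd hr)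
  have h2 : 0 < S.detKin.rate (r.1, r.2) c := by
    have : (r.1, r.2) ∈ S.G.R := by rwa [Prod.mk.eta]
    exact rate_pos (fun i => (hc i).le) this (fun i _ => hc i)
  rw [h1, S.detKin.zero_off _ hrev] at h2
  exact lt_irrefl 0 h2

lemma beta_symm (hc : ∀ i, 0 < c i) (hrb : Det.ReactionBalanced S.detKin c)
    {r : Reaction n} (hr : r ∈ S.G.R) :
    S.κ r * ∏ i, c i ^ (r.1 i) = S.κ (r.2, r.1) * ∏ i, c i ^ (r.2 i) := by
  have h1 : S.detKin.rate (r.1, r.2) c = S.detKin.rate (r.2, r.1) c :=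
    hrb r.1 (mem_C_fst hr) r.2 (mem_C_snd hr)
  rw [rate_def, rate_def, if_pos (fun i => (hc i).le)] at h1
  simpa [Prod.mk.eta] using h1

lemma beta_pos (hc : ∀ i, 0 < c i) {r : Reaction n} (hr : r ∈ S.G.R) :
    0 < S.κ r * ∏ i, c i ^ (r.1 i) :=
  mul_pos (S.pos r hr) (Finset.prod_pos fun i _ => pow_pos (hc i) _)

/-- Exponential form of the monomial. -/
lemma prod_pow_eq_exp (hc : ∀ i, 0 < c i) {z : Fin n → ℝ} (y : Cplx n)
    (hsupp : ∀ i, y i ≠ 0 → 0 < z i) :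
    ∏ i, z i ^ (y i) =
      (∏ i, c i ^ (y i)) *
        Real.exp (∑ i, (y i : ℝ) * (if 0 < z i then Real.log (z i) - Real.log (c i) else 0)) := by
  rw [Real.exp_sum, ← Finset.prod_mul_distrib]
  refine Finset.prod_congr rfl fun i _ => ?_
  rcases Nat.eq_zero_or_pos (y i) with h | h
  · simp [h]
  · have hz : 0 < z i := hsupp i h.ne'
    rw [if_pos hz, Real.exp_nat_mul]  -- exp (y * ν) = (exp ν) ^ y ?
    rw [← mul_pow]
    congr 1
    rw [Real.exp_sub, Real.exp_log hz, Real.exp_log (hc i)]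
    rw [mul_comm, div_mul_cancel₀ _ (hc i).ne']

/-- If all paired reaction rates agree, the state is an equilibrium. -/
lemma equilibrium_of_pairwise (hc : ∀ i, 0 < c i) (hrb : Det.ReactionBalanced S.detKin c)
    {z : Fin n → ℝ} (hpair : ∀ r ∈ S.G.R, S.detKin.rate r z = S.detKin.rate (r.2, r.1) z) :
    Det.IsEquilibrium S.detKin z := by
  unfold Det.IsEquilibrium
  refine Finset.sum_involution (fun r _ => (r.2, r.1)) ?_ ?_ ?_ ?_
  · intro r hr
    rw [hpair r hr]
    simp only [smul_sub]
    abel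
  · intro r hr _ hcon
    have : r.2 = r.1 := congrArg Prod.fst hcon
    exact S.G.ne_src_tgt r hr (this.symm)
  · intro r hr; exact rev_mem hc hrb hr
  · intro r hr; rfl

/-- Reaction balance from pairwise rate equality on reactions. -/
lemma rb_of_pairwise (hc : ∀ i, 0 < c i) (hrb : Det.ReactionBalanced S.detKin c)
    {z : Fin n → ℝ} (hpair : ∀ r ∈ S.G.R, S.detKin.rate r z = S.detKin.rate (r.2, r.1) z) :
    Det.ReactionBalanced S.detKin z := by
  intro y hy y' hy'
  by_cases h : (y, y') ∈ S.G.R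
  · exact hpair (y, y') h
  · have h' : (y', y) ∉ S.G.R := by
      intro h'
      exact h (rev_mem hc hrb h')
    rw [S.detKin.zero_off _ h, S.detKin.zero_off _ h']

end RBAux
namespace RBAux

open Finset Real

variable {n : ℕ} {S : MASystem n} {c : Fin n → ℝ}

/-- The log-ratio vector of `z` against `c`, truncated off the support of `z`. -/
def nu (c z : Fin n → ℝ) : Fin n → ℝ :=
  fun i => if 0 < z i then Real.log (z i) - Real.log (c i) else 0

/-- `⟨y, nu⟩`. -/
def AA (c z : Fin n → ℝ) (y : Cplx n) : ℝ := ∑ i, (y i : ℝ) * nu c z i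

lemma rate_exp_form (hc : ∀ i, 0 < c i) {z : Fin n → ℝ} (hz : ∀ i, 0 ≤ z i)
    {r : Reaction n} (hsupp : ∀ i, r.1 i ≠ 0 → 0 < z i) :
    S.detKin.rate r z = (S.κ r * ∏ i, c i ^ (r.1 i)) * Real.exp (AA c z r.1) := by
  rw [rate_def, if_pos hz, one_mul, prod_pow_eq_exp hc _ hsupp, mul_assoc]; rfl

lemma sum_mul_ind_zero {z : Fin n → ℝ} {y : Cplx n} (hsupp : ∀ i, y i ≠ 0 → 0 < z i) :
    ∑ i, (y i : ℝ) * (if 0 < z i then (0:ℝ) else 1) = 0 := by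
  refine Finset.sum_eq_zero fun i _ => ?_
  by_cases h : 0 < z i
  · rw [if_pos h, mul_zero]
  · have : y i = 0 := by
      by_contra hy; exact h (hsupp i hy)
    rw [this]; norm_num

/-- Core lemma: at a nonnegative equilibrium the paired rates agree, and the
log-linear relation holds for active reactions. -/
lemma core (hc : ∀ i, 0 < c i) (hrb : Det.ReactionBalanced S.detKin c)
    {z : Fin n → ℝ} (hz : ∀ i, 0 ≤ z i) (heq : Det.IsEquilibrium S.detKin z) :
    ∀ r ∈ S.G.R, S.detKin.rate r z = S.detKin.rate (r.2, r.1) z ∧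
      (0 < S.detKin.rate r z → AA c z r.2 = AA c z r.1) := by
  -- the linear functional consequence of equilibrium
  have hF : ∀ q : Fin n → ℝ,
      ∑ r ∈ S.G.R, S.detKin.rate r z * (∑ i, ((r.2 i : ℝ) - (r.1 i : ℝ)) * q i) = 0 := by
    intro q
    have h0 := congrArg (fun w : Fin n → ℝ => ∑ i, w i * q i) heq
    simp only [Pi.zero_apply, zero_mul, Finset.sum_const_zero] at h0
    rw [← h0]
    simp only [Finset.sum_apply, Pi.smul_apply, Pi.sub_apply, smul_eq_mul, Finset.sum_mul]
    rw [Finset.sum_comm]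
    refine Finset.sum_congr rfl fun r _ => ?_
    rw [Finset.mul_sum]
    refine Finset.sum_congr rfl fun i _ => ?_
    unfold toR; ring
  have hrnn : ∀ r, 0 ≤ S.detKin.rate r z := fun r => S.detKin.nonneg r z
  -- ind-mass of targets of active reactions vanishes
  have key1 : ∀ r ∈ S.G.R,
      S.detKin.rate r z * (∑ i, (r.2 i : ℝ) * (if 0 < z i then (0:ℝ) else 1)) = 0 := by
    set ind : Fin n → ℝ := fun i => if 0 < z i then (0:ℝ) else 1 with hind
    have hterm : ∀ r : Reaction n,
        S.detKin.rate r z * (∑ i, ((r.2 i : ℝ) - (r.1 i : ℝ)) * ind i) =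
        S.detKin.rate r z * (∑ i, (r.2 i : ℝ) * ind i) := by
      intro r
      rcases (hrnn r).lt_or_eq with hpos | h0
      · have hsupp := (of_rate_pos hpos).2
        have h1 : ∑ i, (r.1 i : ℝ) * ind i = 0 := sum_mul_ind_zero hsupp
        have : ∑ i, ((r.2 i : ℝ) - (r.1 i : ℝ)) * ind i =
            (∑ i, (r.2 i : ℝ) * ind i) - ∑ i, (r.1 i : ℝ) * ind i := by
          rw [← Finset.sum_sub_distrib]
          exact Finset.sum_congr rfl fun i _ => by ring
        rw [this, h1, sub_zero]
      · rw [← h0, zero_mul, zero_mul]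
    have hsum : ∑ r ∈ S.G.R, S.detKin.rate r z * (∑ i, (r.2 i : ℝ) * ind i) = 0 := by
      rw [← hF ind]
      exact Finset.sum_congr rfl fun r _ => (hterm r).symm
    have hnn : ∀ r ∈ S.G.R, 0 ≤ S.detKin.rate r z * (∑ i, (r.2 i : ℝ) * ind i) := by
      intro r _
      refine mul_nonneg (hrnn r) (Finset.sum_nonneg fun i _ => ?_)
      refine mul_nonneg (by positivity) ?_
      rw [hind]; dsimp only; split <;> norm_num
    intro r hr
    exact (Finset.sum_eq_zero_iff_of_nonneg hnn).mp hsum r hr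
  -- hence targets of active reactions are supported in W
  have key2 : ∀ r : Reaction n, 0 < S.detKin.rate r z → ∀ i, r.2 i ≠ 0 → 0 < z i := by
    intro r hpos i hi
    have hr := (of_rate_pos hpos).1
    have h1 := key1 r hr
    rw [mul_eq_zero] at h1
    rcases h1 with h1 | h1
    · exact absurd h1 hpos.ne'
    · by_contra hzi
      have hterm : ∀ j ∈ Finset.univ, (0:ℝ) ≤ (r.2 j : ℝ) * (if 0 < z j then (0:ℝ) else 1) := by
        intro j _
        refine mul_nonneg (by positivity) ?_
        split <;> norm_num
      have := (Finset.sum_eq_zero_iff_of_nonneg hterm).mp h1 i (Finset.mem_univ i)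
      rw [if_neg hzi, mul_one] at this
      exact hi (by exact_mod_cast this)
  -- both-or-neither activity, with exponential forms
  have hboth : ∀ r ∈ S.G.R,
      (S.detKin.rate r z = 0 ∧ S.detKin.rate (r.2, r.1) z = 0) ∨
      (S.detKin.rate r z = (S.κ r * ∏ i, c i ^ (r.1 i)) * Real.exp (AA c z r.1) ∧
       S.detKin.rate (r.2, r.1) z = (S.κ r * ∏ i, c i ^ (r.1 i)) * Real.exp (AA c z r.2)) := by
    intro r hr
    rcases (hrnn r).lt_or_eq with hpos | h0
    · right
      have hsupp1 := (of_rate_pos hpos).2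
      have hsupp2 := key2 r hpos
      constructor
      · exact rate_exp_form hc hz hsupp1
      · rw [rate_exp_form hc hz (r := (r.2, r.1)) hsupp2]
        rw [← beta_symm hc hrb hr]
    · rcases (hrnn (r.2, r.1)).lt_or_eq with hpos' | h0'
      · exfalso
        have hsupp2 := (of_rate_pos hpos').2
        have hsupp1 := key2 _ hpos'
        have : 0 < S.detKin.rate r z := rate_pos hz hr (fun i hi => hsupp1 i hi)
        exact this.ne' h0.symm
      · exact Or.inl ⟨h0.symm, h0'.symm⟩
  -- the pair sums are nonpositive and sum to zero
  have hDelta : ∀ r : Reaction n,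
      ∑ i, ((r.2 i : ℝ) - (r.1 i : ℝ)) * nu c z i = AA c z r.2 - AA c z r.1 := by
    intro r
    rw [AA, AA, ← Finset.sum_sub_distrib]
    exact Finset.sum_congr rfl fun i _ => by ring
  set f : Reaction n → ℝ :=
    fun r => S.detKin.rate r z * (AA c z r.2 - AA c z r.1) with hfdef
  have hf0 : ∑ r ∈ S.G.R, f r = 0 := by
    rw [← hF (nu c z)]
    exact Finset.sum_congr rfl fun r _ => by rw [hfdef]; dsimp only; rw [hDelta]
  have hfswap : ∑ r ∈ S.G.R, f (r.2, r.1) = 0 := by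
    rw [Finset.sum_nbij' (fun r : Reaction n => (r.2, r.1)) (fun r : Reaction n => (r.2, r.1))
      (fun r hr => rev_mem hc hrb hr) (fun r hr => rev_mem hc hrb hr)
      (fun r _ => rfl) (fun r _ => rfl) (fun r _ => rfl)]
    exact hf0
  have hgle : ∀ r ∈ S.G.R, f r + f (r.2, r.1) ≤ 0 := by
    intro r hr
    rcases hboth r hr with ⟨h1, h2⟩ | ⟨h1, h2⟩
    · rw [hfdef]; dsimp only; rw [h1, h2]; ring_nf; exact le_refl 0
    · rw [hfdef]; dsimp only; rw [h1, h2]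
      have hb := beta_pos hc hr
      set β := S.κ r * ∏ i, c i ^ (r.1 i)
      set a1 := AA c z r.1
      set a2 := AA c z r.2
      have hexp : 0 ≤ (Real.exp a2 - Real.exp a1) * (a2 - a1) := by
        rcases le_total a1 a2 with hle | hle
        · have := Real.exp_le_exp.mpr hle; nlinarith
        · have := Real.exp_le_exp.mpr hle; nlinarith
      nlinarith [hb, hexp]
  have hgsum : ∑ r ∈ S.G.R, (f r + f (r.2, r.1)) = 0 := by
    rw [Finset.sum_add_distrib, hf0, hfswap, add_zero]
  have hg0 := (Finset.sum_eq_zero_iff_of_nonpos hgle).mp hgsum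
  -- conclude
  intro r hr
  rcases hboth r hr with ⟨h1, h2⟩ | ⟨h1, h2⟩
  · refine ⟨by rw [h1, h2], fun hpos => absurd h1 hpos.ne'⟩
  · have hg := hg0 r hr
    rw [hfdef] at hg; dsimp only at hg
    rw [h1, h2] at hg
    have hb := beta_pos hc hr
    set β := S.κ r * ∏ i, c i ^ (r.1 i)
    set a1 := AA c z r.1
    set a2 := AA c z r.2
    have hA : a2 = a1 := by
      by_contra hne
      rcases lt_or_gt_of_ne hne with hlt | hlt
      · have he : Real.exp a2 < Real.exp a1 := Real.exp_lt_exp.mpr hlt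
        nlinarith [mul_pos hb (mul_pos (sub_pos.mpr hlt) (sub_pos.mpr he)), hg]
      · have he : Real.exp a1 < Real.exp a2 := Real.exp_lt_exp.mpr hlt
        nlinarith [mul_pos hb (mul_pos (sub_pos.mpr hlt) (sub_pos.mpr he)), hg]
    exact ⟨by rw [h1, h2, hA], fun _ => hA⟩

end RBAux
namespace RBAux

open Finset Real

variable {n : ℕ} {S : MASystem n} {c : Fin n → ℝ}

/-- Part 2: every equilibrium is reaction balanced. -/
lemma rb_of_equilibrium (hc : ∀ i, 0 < c i) (hrb : Det.ReactionBalanced S.detKin c)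
    {z : Fin n → ℝ} (heq : Det.IsEquilibrium S.detKin z) :
    Det.ReactionBalanced S.detKin z := by
  by_cases hz : ∀ i, 0 ≤ z i
  · exact rb_of_pairwise hc hrb (fun r hr => (core hc hrb hz heq r hr).1)
  · intro y _ y' _
    rw [rate_of_not_nonneg hz, rate_of_not_nonneg hz]

lemma loglinear_of_pos_equilibrium (hc : ∀ i, 0 < c i)
    (hrb : Det.ReactionBalanced S.detKin c) {z : Fin n → ℝ} (hzpos : ∀ i, 0 < z i)
    (heq : Det.IsEquilibrium S.detKin z) :
    ∀ r ∈ S.G.R, ∑ i, ((r.2 i : ℝ) - (r.1 i : ℝ)) * (Real.log (z i) - Real.log (c i)) = 0 := by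
  intro r hr
  have hz : ∀ i, 0 ≤ z i := fun i => (hzpos i).le
  have hA := (core hc hrb hz heq r hr).2 (rate_pos hz hr (fun i _ => hzpos i))
  have hrw : ∑ i, ((r.2 i : ℝ) - (r.1 i : ℝ)) * (Real.log (z i) - Real.log (c i)) =
      AA c z r.2 - AA c z r.1 := by
    rw [AA, AA, ← Finset.sum_sub_distrib]
    refine Finset.sum_congr rfl fun i _ => ?_
    rw [nu, if_pos (hzpos i)]
    ring
  rw [hrw, hA, sub_self]

/-- Linear functional vanishing on generators vanishes on the stoichiometric subspace. -/
lemma perp_span {q : Fin n → ℝ}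
    (hq : ∀ r ∈ S.G.R, ∑ i, ((r.2 i : ℝ) - (r.1 i : ℝ)) * q i = 0) :
    ∀ w ∈ stoichSubspace S.G, ∑ i, w i * q i = 0 := by
  set ℓ : (Fin n → ℝ) →ₗ[ℝ] ℝ :=
    { toFun := fun w => ∑ i, w i * q i
      map_add' := fun a b => by
        simp only [Pi.add_apply, add_mul, Finset.sum_add_distrib]
      map_smul' := fun m a => by
        simp only [Pi.smul_apply, smul_eq_mul, RingHom.id_apply, Finset.mul_sum, mul_assoc] }
    with hl
  have hle : stoichSubspace S.G ≤ LinearMap.ker ℓ := by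
    rw [stoichSubspace, Submodule.span_le]
    rintro w ⟨r, hrR, rfl⟩
    have hrR' : r ∈ S.G.R := hrR
    rw [SetLike.mem_coe, LinearMap.mem_ker, hl]
    dsimp only [LinearMap.coe_mk, AddHom.coe_mk]
    rw [← hq r hrR']
    refine Finset.sum_congr rfl fun i _ => ?_
    simp [toR]
  intro w hw
  exact hle hw

lemma sq_term_nonneg {a b : ℝ} (ha : 0 < a) (hb : 0 < b) :
    0 ≤ (a - b) * (Real.log a - Real.log b) := by
  rcases le_total a b with h | h
  · have := Real.log_le_log ha h; nlinarith
  · have := Real.log_le_log hb h; nlinarith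

lemma eq_of_sq_term_zero {a b : ℝ} (ha : 0 < a) (hb : 0 < b)
    (h : (a - b) * (Real.log a - Real.log b) = 0) : a = b := by
  by_contra hne
  rcases lt_or_gt_of_ne hne with hlt | hlt
  · have := Real.log_lt_log ha hlt; nlinarith
  · have := Real.log_lt_log hb hlt; nlinarith

/-- Uniqueness of positive equilibria in a compatibility class. -/
lemma uniq_pos_equilibrium (hc : ∀ i, 0 < c i) (hrb : Det.ReactionBalanced S.detKin c)
    {v z1 z2 : Fin n → ℝ}
    (h1 : z1 ∈ compatClass S.G v) (h1p : ∀ i, 0 < z1 i)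
    (h1e : Det.IsEquilibrium S.detKin z1)
    (h2 : z2 ∈ compatClass S.G v) (h2p : ∀ i, 0 < z2 i)
    (h2e : Det.IsEquilibrium S.detKin z2) : z1 = z2 := by
  have hq : ∀ r ∈ S.G.R,
      ∑ i, ((r.2 i : ℝ) - (r.1 i : ℝ)) * (Real.log (z1 i) - Real.log (z2 i)) = 0 := by
    intro r hr
    have hA := loglinear_of_pos_equilibrium hc hrb h1p h1e r hr
    have hB := loglinear_of_pos_equilibrium hc hrb h2p h2e r hr
    have : ∑ i, ((r.2 i : ℝ) - (r.1 i : ℝ)) * (Real.log (z1 i) - Real.log (z2 i)) =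
        (∑ i, ((r.2 i : ℝ) - (r.1 i : ℝ)) * (Real.log (z1 i) - Real.log (c i))) -
        ∑ i, ((r.2 i : ℝ) - (r.1 i : ℝ)) * (Real.log (z2 i) - Real.log (c i)) := by
      rw [← Finset.sum_sub_distrib]
      exact Finset.sum_congr rfl fun i _ => by ring
    rw [this, hA, hB, sub_zero]
  have hw : z1 - z2 ∈ stoichSubspace S.G := by
    have := Submodule.sub_mem _ h1.1 h2.1
    simpa using this
  have h0 := perp_span hq _ hw
  have hterm : ∀ i ∈ Finset.univ,
      (0:ℝ) ≤ (z1 - z2) i * (Real.log (z1 i) - Real.log (z2 i)) := by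
    intro i _
    exact sq_term_nonneg (h1p i) (h2p i)
  have hall := (Finset.sum_eq_zero_iff_of_nonneg hterm).mp h0
  funext i
  exact eq_of_sq_term_zero (h1p i) (h2p i) (hall i (Finset.mem_univ i))

end RBAux
namespace RBAux

open Finset Real

variable {n : ℕ} {S : MASystem n} {c : Fin n → ℝ}

/-- The entropy-like function minimized on compatibility classes. -/
def hfun (c z : Fin n → ℝ) : ℝ :=
  ∑ i, (z i * Real.log (z i) - z i * (Real.log (c i) + 1))

lemma hfun_continuous (c : Fin n → ℝ) : Continuous (hfun c) := by
  refine continuous_finset_sum _ fun i _ => ?_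
  exact (Real.continuous_mul_log.comp (continuous_apply i)).sub
    ((continuous_apply i).mul continuous_const)

lemma phi_lb (b : ℝ) {x : ℝ} (hx : 0 ≤ x) :
    -Real.exp b ≤ x * Real.log x - x * (b + 1) := by
  rcases hx.lt_or_eq with hx | hx
  · have h1 : Real.exp (b - Real.log x) = Real.exp b / x := by
      rw [Real.exp_sub, Real.exp_log hx]
    have h2 := Real.add_one_le_exp (b - Real.log x)
    rw [h1] at h2
    have h3 : (b - Real.log x + 1) * x ≤ Real.exp b := (le_div_iff₀ hx).mp h2
    nlinarith
  · rw [← hx]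
    simpa using (Real.exp_pos b).le

lemma phi_coercive (b : ℝ) {x : ℝ} (hx : max 1 (Real.exp (b + 2)) ≤ x) :
    x ≤ x * Real.log x - x * (b + 1) := by
  have hx1 : (1:ℝ) ≤ x := le_trans (le_max_left _ _) hx
  have hx0 : (0:ℝ) < x := by linarith
  have hlog : b + 2 ≤ Real.log x :=
    (Real.le_log_iff_exp_le hx0).mpr (le_trans (le_max_right _ _) hx)
  nlinarith

lemma sublevel_bound (c : Fin n → ℝ) {M : ℝ} {z : Fin n → ℝ} (hz : ∀ i, 0 ≤ z i)
    (hM : hfun c z ≤ M) (j : Fin n) :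
    z j ≤ max (max 1 (Real.exp (Real.log (c j) + 2)))
      (M + (∑ i, Real.exp (Real.log (c i))) + 1) := by
  set E := ∑ i, Real.exp (Real.log (c i)) with hE
  by_contra hcon
  push_neg at hcon
  have h1 : max 1 (Real.exp (Real.log (c j) + 2)) ≤ z j :=
    le_trans (le_max_left _ _) hcon.le
  have hφ : z j ≤ z j * Real.log (z j) - z j * (Real.log (c j) + 1) :=
    phi_coercive (Real.log (c j)) h1
  have hsplit : hfun c z =
      (z j * Real.log (z j) - z j * (Real.log (c j) + 1)) +
      ∑ i ∈ Finset.univ.erase j, (z i * Real.log (z i) - z i * (Real.log (c i) + 1)) :=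
    (Finset.add_sum_erase _ _ (Finset.mem_univ j)).symm
  have hrest : ∑ i ∈ Finset.univ.erase j, (-(Real.exp (Real.log (c i)))) ≤
      ∑ i ∈ Finset.univ.erase j, (z i * Real.log (z i) - z i * (Real.log (c i) + 1)) :=
    Finset.sum_le_sum fun i _ => phi_lb (Real.log (c i)) (hz i)
  have hrest2 : -E ≤ ∑ i ∈ Finset.univ.erase j, (-(Real.exp (Real.log (c i)))) := by
    rw [Finset.sum_neg_distrib, neg_le_neg_iff]
    exact Finset.sum_le_sum_of_subset_of_nonneg (Finset.erase_subset _ _)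
      (fun i _ _ => (Real.exp_pos _).le)
  have hzj : M + E + 1 < z j := lt_of_le_of_lt (le_max_right _ _) hcon
  linarith [hsplit, hrest, hrest2, hφ, hM, hzj]

lemma compatClass_closed (G : Network n) (v : Fin n → ℝ) : IsClosed (compatClass G v) := by
  have h1 : IsClosed {z : Fin n → ℝ | z - v ∈ stoichSubspace G} := by
    have : IsClosed (stoichSubspace G : Set (Fin n → ℝ)) :=
      Submodule.closed_of_finiteDimensional _
    exact this.preimage (continuous_id.sub continuous_const)
  have h2 : IsClosed {z : Fin n → ℝ | ∀ i, 0 ≤ z i} := by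
    have : {z : Fin n → ℝ | ∀ i, 0 ≤ z i} = ⋂ i, {z : Fin n → ℝ | 0 ≤ z i} := by
      ext z; simp
    rw [this]
    exact isClosed_iInter fun i => isClosed_le continuous_const (continuous_apply i)
  exact h1.inter h2

/-- Existence of a minimizer of `hfun c` over a positive compatibility class. -/
lemma exists_minimizer (hc : ∀ i, 0 < c i) {v z0 : Fin n → ℝ}
    (hz0K : z0 ∈ compatClass S.G v) :
    ∃ zs ∈ compatClass S.G v, ∀ z ∈ compatClass S.G v, hfun c zs ≤ hfun c z := by
  set K := compatClass S.G v with hK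
  set K' := K ∩ (hfun c) ⁻¹' Set.Iic (hfun c z0) with hK'
  have hK'closed : IsClosed K' :=
    (compatClass_closed S.G v).inter (isClosed_Iic.preimage (hfun_continuous c))
  set Rf : Fin n → ℝ := fun j => max (max 1 (Real.exp (Real.log (c j) + 2)))
      ((hfun c z0) + (∑ i, Real.exp (Real.log (c i))) + 1) with hRf
  have hsub : K' ⊆ Set.Icc (0 : Fin n → ℝ) Rf := by
    rintro z ⟨hzK, hzs⟩
    constructor
    · intro i; exact hzK.2 i
    · intro j; exact sublevel_bound c hzK.2 hzs j
  have hcpt : IsCompact K' := IsCompact.of_isClosed_subset isCompact_Icc hK'closed hsub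
  have hne : K'.Nonempty := ⟨z0, hz0K, Set.mem_preimage.mpr (Set.mem_Iic.mpr le_rfl)⟩
  obtain ⟨zs, hzsK', hmin⟩ := hcpt.exists_isMinOn hne (hfun_continuous c).continuousOn
  refine ⟨zs, hzsK'.1, fun z hz => ?_⟩
  by_cases h : hfun c z ≤ hfun c z0
  · exact isMinOn_iff.mp hmin z ⟨hz, h⟩
  · push_neg at h
    exact le_trans (isMinOn_iff.mp hmin z0 ⟨hz0K, Set.mem_preimage.mpr (Set.mem_Iic.mpr le_rfl)⟩) h.le

end RBAux
namespace RBAux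

open Finset Real

variable {n : ℕ} {S : MASystem n} {c : Fin n → ℝ}

lemma minimizer_pos (hc : ∀ i, 0 < c i) {v z0 zs : Fin n → ℝ}
    (hz0K : z0 ∈ compatClass S.G v) (hz0p : ∀ i, 0 < z0 i)
    (hzsK : zs ∈ compatClass S.G v)
    (hmin : ∀ z ∈ compatClass S.G v, hfun c zs ≤ hfun c z) : ∀ i, 0 < zs i := by
  by_contra hnp
  push_neg at hnp
  obtain ⟨j, hj⟩ := hnp
  have hzs_nonneg : ∀ i, 0 ≤ zs i := hzsK.2
  have hjz : zs j = 0 := le_antisymm hj (hzs_nonneg j)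
  set d : Fin n → ℝ := fun i => z0 i - zs i with hd
  set Zf := Finset.univ.filter (fun i => zs i = 0) with hZf
  have hjZ : j ∈ Zf := by rw [hZf]; simp [hjz]
  have hdpos : ∀ i ∈ Zf, 0 < d i := by
    intro i hi
    have h0 : zs i = 0 := (Finset.mem_filter.mp hi).2
    rw [hd]; dsimp only; rw [h0, sub_zero]; exact hz0p i
  set D := ∑ i ∈ Zf, d i with hD
  have hDpos : 0 < D := Finset.sum_pos hdpos ⟨j, hjZ⟩
  -- per-coordinate Lipschitz bound on the positive coordinates
  have hMVT : ∀ i : Fin n, ∃ L : ℝ, ∀ t ∈ Set.Icc (0:ℝ) 1, zs i ≠ 0 →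
      ((zs i + t * d i) * Real.log (zs i + t * d i)
        - (zs i + t * d i) * (Real.log (c i) + 1))
        - (zs i * Real.log (zs i) - zs i * (Real.log (c i) + 1)) ≤ L * t := by
    intro i
    by_cases hzi : zs i = 0
    · exact ⟨0, fun t _ h => absurd hzi h⟩
    have hzip : 0 < zs i := lt_of_le_of_ne (hzs_nonneg i) (Ne.symm hzi)
    have hmpos : 0 < min (zs i) (z0 i) := lt_min hzip (hz0p i)
    have hu : ∀ t ∈ Set.Icc (0:ℝ) 1,
        min (zs i) (z0 i) ≤ zs i + t * d i ∧ zs i + t * d i ≤ max (zs i) (z0 i) := by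
      intro t ht
      obtain ⟨ht0, ht1⟩ := ht
      have hdi : d i = z0 i - zs i := rfl
      constructor
      · nlinarith [min_le_left (zs i) (z0 i), min_le_right (zs i) (z0 i)]
      · nlinarith [le_max_left (zs i) (z0 i), le_max_right (zs i) (z0 i)]
    have hderiv : ∀ t ∈ Set.Icc (0:ℝ) 1,
        HasDerivWithinAt (fun s : ℝ => (zs i + s * d i) * Real.log (zs i + s * d i)
          - (zs i + s * d i) * (Real.log (c i) + 1))
          ((Real.log (zs i + t * d i) + 1 - (Real.log (c i) + 1)) * d i)
          (Set.Icc 0 1) t := by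
      intro t ht
      have hu0 : 0 < zs i + t * d i := lt_of_lt_of_le hmpos (hu t ht).1
      have h1 : HasDerivAt (fun s : ℝ => zs i + s * d i) (d i) t := by
        simpa using (hasDerivAt_mul_const (d i)).const_add (zs i)
      have h2 : HasDerivAt (fun u : ℝ => u * Real.log u - u * (Real.log (c i) + 1))
          (Real.log (zs i + t * d i) + 1 - (Real.log (c i) + 1)) (zs i + t * d i) :=
        (Real.hasDerivAt_mul_log hu0.ne').sub (hasDerivAt_mul_const _)
      exact (h2.comp t h1).hasDerivWithinAt
    set L := (|Real.log (min (zs i) (z0 i))| + |Real.log (max (zs i) (z0 i))|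
        + |Real.log (c i)|) * |d i| with hLdef
    have hbound : ∀ t ∈ Set.Ico (0:ℝ) 1,
        ‖(Real.log (zs i + t * d i) + 1 - (Real.log (c i) + 1)) * d i‖ ≤ L := by
      intro t ht
      have ht' : t ∈ Set.Icc (0:ℝ) 1 := ⟨ht.1, ht.2.le⟩
      obtain ⟨hml, hMu⟩ := hu t ht'
      have hu0 : 0 < zs i + t * d i := lt_of_lt_of_le hmpos hml
      have hl1 : Real.log (min (zs i) (z0 i)) ≤ Real.log (zs i + t * d i) :=
        Real.log_le_log hmpos hml
      have hl2 : Real.log (zs i + t * d i) ≤ Real.log (max (zs i) (z0 i)) :=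
        Real.log_le_log hu0 hMu
      have habs : |Real.log (zs i + t * d i)| ≤
          |Real.log (min (zs i) (z0 i))| + |Real.log (max (zs i) (z0 i))| := by
        rw [abs_le]
        constructor
        · linarith [neg_abs_le (Real.log (min (zs i) (z0 i))),
            abs_nonneg (Real.log (max (zs i) (z0 i)))]
        · linarith [le_abs_self (Real.log (max (zs i) (z0 i))),
            abs_nonneg (Real.log (min (zs i) (z0 i)))]
      have heq : (Real.log (zs i + t * d i) + 1 - (Real.log (c i) + 1)) * d i =
          (Real.log (zs i + t * d i) - Real.log (c i)) * d i := by ring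
      rw [Real.norm_eq_abs, heq, abs_mul, hLdef]
      refine mul_le_mul_of_nonneg_right ?_ (abs_nonneg _)
      calc |Real.log (zs i + t * d i) - Real.log (c i)| ≤
          |Real.log (zs i + t * d i)| + |Real.log (c i)| := abs_sub _ _
        _ ≤ _ := by linarith
    refine ⟨L, fun t ht _ => ?_⟩
    have hmvt := norm_image_sub_le_of_norm_deriv_le_segment' hderiv hbound t ht
    rw [Real.norm_eq_abs, sub_zero] at hmvt
    have h4 := le_trans (le_abs_self _) hmvt
    simp only [zero_mul, add_zero] at h4
    exact h4
  choose L hLspec using hMVT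
  set Zc := Finset.univ.filter (fun i => ¬ zs i = 0) with hZc
  set C := ∑ i ∈ Zc, L i with hCdef
  set c2 := ∑ i ∈ Zf, d i * (Real.log (d i) - (Real.log (c i) + 1)) with hc2
  set t0 := min 1 (Real.exp (-(c2 + C + 1)/D)) with ht0def
  have ht0pos : 0 < t0 := lt_min one_pos (Real.exp_pos _)
  have ht0le : t0 ≤ 1 := min_le_left _ _
  set x : Fin n → ℝ := fun i => zs i + t0 * d i with hxdef
  have hxK : x ∈ compatClass S.G v := by
    constructor
    · have hsub : x - v = (zs - v) + (t0 • (z0 - v) - t0 • (zs - v)) := by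
        funext i
        simp only [hxdef, hd, Pi.sub_apply, Pi.add_apply, Pi.smul_apply, smul_eq_mul]
        ring
      rw [hsub]
      exact Submodule.add_mem _ hzsK.1
        (Submodule.sub_mem _ (Submodule.smul_mem _ _ hz0K.1) (Submodule.smul_mem _ _ hzsK.1))
    · intro i
      have hdi : d i = z0 i - zs i := rfl
      show 0 ≤ zs i + t0 * d i
      nlinarith [hzs_nonneg i, (hz0p i).le, ht0pos, ht0le]
  -- the decrease
  set g : Fin n → ℝ := fun i =>
    (x i * Real.log (x i) - x i * (Real.log (c i) + 1))
      - (zs i * Real.log (zs i) - zs i * (Real.log (c i) + 1)) with hgdef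
  have hsplit : hfun c x - hfun c zs = (∑ i ∈ Zf, g i) + ∑ i ∈ Zc, g i := by
    rw [hfun, hfun, ← Finset.sum_sub_distrib]
    exact (Finset.sum_filter_add_sum_filter_not Finset.univ (fun i => zs i = 0) g).symm
  have hZfterm : ∀ i ∈ Zf, g i =
      t0 * (d i * Real.log t0 + d i * (Real.log (d i) - (Real.log (c i) + 1))) := by
    intro i hi
    have h0 : zs i = 0 := (Finset.mem_filter.mp hi).2
    have hdp : 0 < d i := hdpos i hi
    have hxi : x i = t0 * d i := by rw [hxdef]; dsimp only; rw [h0, zero_add]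
    rw [hgdef]; dsimp only
    rw [hxi, h0, Real.log_mul ht0pos.ne' hdp.ne']
    simp only [Real.log_zero, zero_mul, mul_zero, sub_zero, zero_sub, neg_zero]
    ring
  have hZfsum : ∑ i ∈ Zf, g i = t0 * (D * Real.log t0 + c2) := by
    rw [Finset.sum_congr rfl hZfterm, ← Finset.mul_sum]
    congr 1
    rw [Finset.sum_add_distrib, ← Finset.sum_mul, hD, hc2]
  have hZcsum : ∑ i ∈ Zc, g i ≤ C * t0 := by
    have hterm : ∀ i ∈ Zc, g i ≤ L i * t0 := by
      intro i hi
      have hzi : ¬ zs i = 0 := (Finset.mem_filter.mp hi).2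
      have := hLspec i t0 ⟨ht0pos.le, ht0le⟩ hzi
      rw [hgdef]; dsimp only
      rw [hxdef]; dsimp only
      exact this
    calc ∑ i ∈ Zc, g i ≤ ∑ i ∈ Zc, L i * t0 := Finset.sum_le_sum hterm
      _ = C * t0 := by rw [hCdef, Finset.sum_mul]
  have hlogt0 : D * Real.log t0 + c2 + C ≤ -1 := by
    have h1 : Real.log t0 ≤ -(c2 + C + 1)/D := by
      have h2 : t0 ≤ Real.exp (-(c2 + C + 1)/D) := min_le_right _ _
      have h3 := Real.log_le_log ht0pos h2
      rwa [Real.log_exp] at h3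
    have h3 : D * Real.log t0 ≤ -(c2 + C + 1) := by
      have h4 := mul_le_mul_of_nonneg_left h1 hDpos.le
      have h5 : D * (-(c2 + C + 1)/D) = -(c2 + C + 1) := by field_simp
      rwa [h5] at h4
    linarith
  have hdec : hfun c x - hfun c zs ≤ -t0 := by
    rw [hsplit, hZfsum]
    nlinarith [hZcsum, ht0pos, hlogt0]
  have hge := hmin x hxK
  linarith
end RBAux
namespace RBAux

open Finset Real

variable {n : ℕ} {S : MASystem n} {c : Fin n → ℝ}

lemma minimizer_loglinear (hc : ∀ i, 0 < c i) {v zs : Fin n → ℝ}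
    (hzsK : zs ∈ compatClass S.G v) (hzsp : ∀ i, 0 < zs i)
    (hmin : ∀ z ∈ compatClass S.G v, hfun c zs ≤ hfun c z) :
    ∀ s ∈ stoichSubspace S.G, ∑ i, s i * (Real.log (zs i) - Real.log (c i)) = 0 := by
  intro s hs
  set U := {t : ℝ | ∀ i, 0 < zs i + t * s i} with hUdef
  have hU : IsOpen U := by
    have hrw : U = ⋂ i, {t : ℝ | 0 < zs i + t * s i} := by
      rw [hUdef]; ext t; simp
    rw [hrw]
    exact isOpen_iInter_of_finite fun i =>
      isOpen_lt continuous_const (continuous_const.add (continuous_id.mul continuous_const))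
  have h0U : (0:ℝ) ∈ U := by
    intro i; simpa using hzsp i
  have hmem : ∀ t ∈ U, (fun i => zs i + t * s i) ∈ compatClass S.G v := by
    intro t ht
    constructor
    · have hsub : (fun i => zs i + t * s i) - v = (zs - v) + t • s := by
        funext i
        simp only [Pi.sub_apply, Pi.add_apply, Pi.smul_apply, smul_eq_mul]
        ring
      rw [hsub]
      exact Submodule.add_mem _ hzsK.1 (Submodule.smul_mem _ _ hs)
    · intro i; exact (ht i).le
  have hf0 : (fun i => zs i + (0:ℝ) * s i) = zs := by funext i; simp
  have hloc : IsLocalMin (fun t : ℝ => hfun c (fun i => zs i + t * s i)) 0 := by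
    refine Filter.eventually_of_mem (hU.mem_nhds h0U) (fun t ht => ?_)
    show hfun c (fun i => zs i + (0:ℝ) * s i) ≤ _
    rw [hf0]
    exact hmin _ (hmem t ht)
  have hderiv : HasDerivAt (fun t : ℝ => hfun c (fun i => zs i + t * s i))
      (∑ i, (Real.log (zs i) - Real.log (c i)) * s i) 0 := by
    have hrfl : (fun t : ℝ => hfun c (fun i => zs i + t * s i)) =
        fun t => ∑ i, ((zs i + t * s i) * Real.log (zs i + t * s i)
          - (zs i + t * s i) * (Real.log (c i) + 1)) := rfl
    rw [hrfl]
    refine HasDerivAt.fun_sum fun i _ => ?_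
    have h1 : HasDerivAt (fun t : ℝ => zs i + t * s i) (s i) 0 := by
      simpa using (hasDerivAt_mul_const (s i)).const_add (zs i)
    have h2 : HasDerivAt (fun u : ℝ => u * Real.log u - u * (Real.log (c i) + 1))
        (Real.log (zs i + 0 * s i) + 1 - (Real.log (c i) + 1)) (zs i + 0 * s i) :=
      (Real.hasDerivAt_mul_log (by simpa using (hzsp i).ne')).sub (hasDerivAt_mul_const _)
    have h3 := h2.comp 0 h1
    have h4 : (Real.log (zs i) - Real.log (c i)) * s i =
        (Real.log (zs i + 0 * s i) + 1 - (Real.log (c i) + 1)) * s i := by norm_num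
    rw [h4]
    exact h3
  have hdz := hloc.deriv_eq_zero
  rw [hderiv.deriv] at hdz
  rw [← hdz]
  exact Finset.sum_congr rfl fun i _ => by ring

lemma exists_pos_equilibrium (hc : ∀ i, 0 < c i) (hrb : Det.ReactionBalanced S.detKin c)
    {v z0 : Fin n → ℝ} (hz0K : z0 ∈ compatClass S.G v) (hz0p : ∀ i, 0 < z0 i) :
    ∃ z, z ∈ compatClass S.G v ∧ (∀ i, 0 < z i) ∧ Det.IsEquilibrium S.detKin z := by
  obtain ⟨zs, hzsK, hmin⟩ := exists_minimizer hc hz0K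
  have hzsp := minimizer_pos hc hz0K hz0p hzsK hmin
  have hperp := minimizer_loglinear hc hzsK hzsp hmin
  have hpair : ∀ r ∈ S.G.R, S.detKin.rate r zs = S.detKin.rate (r.2, r.1) zs := by
    intro r hr
    have hmemS : (toR r.2 - toR r.1) ∈ stoichSubspace S.G :=
      Submodule.subset_span (Set.mem_image_of_mem _ (Finset.mem_coe.mpr hr))
    have h0 := hperp _ hmemS
    have hAA : AA c zs r.1 = AA c zs r.2 := by
      have hrw : ∑ i, (toR r.2 - toR r.1) i * (Real.log (zs i) - Real.log (c i)) =
          AA c zs r.2 - AA c zs r.1 := by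
        rw [AA, AA, ← Finset.sum_sub_distrib]
        refine Finset.sum_congr rfl fun i _ => ?_
        rw [nu, if_pos (hzsp i)]
        simp only [Pi.sub_apply, toR]
        ring
      rw [hrw] at h0
      linarith
    rw [rate_exp_form hc (fun i => (hzsp i).le) (fun i _ => hzsp i),
      rate_exp_form hc (fun i => (hzsp i).le) (r := (r.2, r.1)) (fun i _ => hzsp i)]
    rw [← beta_symm hc hrb hr]
    rw [hAA]
  exact ⟨zs, hzsK, hzsp, equilibrium_of_pairwise hc hrb hpair⟩

end RBAux

/-- If a deterministic mass action system has a positive reaction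
balanced state, then every positive stoichiometric compatibility class contains exactly
one positive equilibrium, and every equilibrium is reaction balanced. -/
theorem mass_action_reaction_balanced_existence_uniqueness {n : ℕ} (S : MASystem n)
    (c : Fin n → ℝ) (hc : ∀ i, 0 < c i) (hrb : Det.ReactionBalanced S.detKin c) :
    (∀ v : Fin n → ℝ, (∃ z ∈ compatClass S.G v, ∀ i, 0 < z i) →
      ∃! z : Fin n → ℝ,
        z ∈ compatClass S.G v ∧ (∀ i, 0 < z i) ∧ Det.IsEquilibrium S.detKin z) ∧
    ∀ z : Fin n → ℝ, Det.IsEquilibrium S.detKin z → Det.ReactionBalanced S.detKin z := by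
  constructor
  · rintro v ⟨z0, hz0K, hz0p⟩
    obtain ⟨zs, hzsK, hzsp, hzse⟩ := RBAux.exists_pos_equilibrium hc hrb hz0K hz0p
    refine ⟨zs, ⟨hzsK, hzsp, hzse⟩, ?_⟩
    rintro w ⟨hwK, hwp, hwe⟩
    exact RBAux.uniq_pos_equilibrium hc hrb hwK hwp hwe hzsK hzsp hzse
  · intro z hz
    exact RBAux.rb_of_equilibrium hc hrb hz
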